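/- Suppose the Fréchet derivative f' is uniformly continuous on C, C is compact in the norm topology, the stepsizes (γ_k) satisfy the open loop rule, and the set of norm cluster points of the sequence (x_k) generated by the Frank–Wolfe algorithm is finite. Then (x_k) converges in norm to a solution of min_{x∈C} f(x). -/

import Mathlib

open Filter Topology Set

/-- Gradient inequality for convex differentiable functions. -/
lemma grad_ineq {X : Type*} [NormedAddCommGroup X] [NormedSpace ℝ X]
    {f : X → ℝ} {f' : X → X →L[ℝ] ℝ}
    (hfconv : ConvexOn ℝ Set.univ f)
    (hfderiv : ∀ x : X, HasFDerivAt f (f' x) x)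
    (a b : X) : f' a (b - a) ≤ f b - f a := by
  set v := b - a with hv
  have hcurve : HasDerivAt (fun t : ℝ => a + t • v) v 0 := by
    simpa using (((hasDerivAt_id (0:ℝ)).smul_const v).const_add a)
  have hφ : HasDerivAt (fun t : ℝ => f (a + t • v)) (f' a v) 0 := by
    have := (hfderiv (a + (0:ℝ) • v)).comp_hasDerivAt 0 hcurve
    simp only [zero_smul, add_zero] at this
    exact this
  have hslope : Tendsto (slope (fun t : ℝ => f (a + t • v)) 0) (𝓝[>] 0) (𝓝 (f' a v)) :=
    (hasDerivAt_iff_tendsto_slope.1 hφ).mono_left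
      (nhdsWithin_mono 0 (fun t ht => ne_of_gt ht))
  have hbound : ∀ᶠ t in 𝓝[>] (0:ℝ), slope (fun t : ℝ => f (a + t • v)) 0 t ≤ f b - f a := by
    filter_upwards [Ioo_mem_nhdsGT_of_mem (by norm_num : (0:ℝ) ∈ Ico (0:ℝ) 1)] with t ht
    have ht0 : 0 < t := ht.1
    have ht1 : t < 1 := ht.2
    have hconv := hfconv.2 (mem_univ a) (mem_univ b)
      (by linarith : (0:ℝ) ≤ 1 - t) (le_of_lt ht0) (by ring)
    have hx : (1 - t) • a + t • b = a + t • v := by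
      rw [hv]; module
    rw [hx] at hconv
    simp only [smul_eq_mul] at hconv
    have key : f (a + t • v) - f a ≤ t * (f b - f a) := by nlinarith
    rw [slope_def_field]
    simp only [sub_zero, zero_smul, add_zero]
    rw [div_le_iff₀ ht0]
    linarith
  exact le_of_tendsto hslope hbound


/-- Points eventually get close to the cluster set. -/
lemma eventually_near_cluster {Y : Type*} [MetricSpace Y] {K : Set Y} (hK : IsCompact K)
    {u : ℕ → Y} (hu : ∀ n, u n ∈ K) {ε : ℝ} (hε : 0 < ε) :
    ∀ᶠ n in atTop, ∃ p, MapClusterPt p atTop u ∧ dist (u n) p < ε := by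
  by_contra h
  rw [Filter.not_eventually] at h
  have hA : (atTop ⊓ 𝓟 {n | ¬∃ p, MapClusterPt p atTop u ∧ dist (u n) p < ε}).NeBot := by
    rwa [← frequently_iff_neBot]
  set l := atTop ⊓ 𝓟 {n | ¬∃ p, MapClusterPt p atTop u ∧ dist (u n) p < ε} with hl
  have hmap : Filter.map u l ≤ 𝓟 K :=
    Filter.tendsto_principal.2 (Eventually.of_forall (fun n => hu n))
  obtain ⟨q, hqK, hq⟩ := hK.exists_mapClusterPt hmap
  have hq' : MapClusterPt q atTop u := hq.mono inf_le_left
  -- q is a cluster point of u along l, but u n stays ε-away from all cluster points on l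
  have hfreq : ∃ᶠ n in l, dist (u n) q < ε := by
    have := mapClusterPt_iff_frequently.1 hq (Metric.ball q ε) (Metric.ball_mem_nhds q hε)
    exact this.mono (fun n hn => by simpa [Metric.mem_ball] using hn)
  have hnever : ∀ᶠ n in l, ¬ dist (u n) q < ε := by
    have : ∀ᶠ n in l, n ∈ {n | ¬∃ p, MapClusterPt p atTop u ∧ dist (u n) p < ε} :=
      Filter.le_principal_iff.1 inf_le_right
    exact this.mono (fun n hn hlt => hn ⟨q, hq', hlt⟩)
  exact (hnever.and_frequently hfreq).exists.elim (fun n hn => hn.1 hn.2)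

/-- Convergence from finite cluster set + vanishing steps. -/
lemma tendsto_of_finite_cluster {Y : Type*} [MetricSpace Y] {K : Set Y} (hK : IsCompact K)
    {u : ℕ → Y} (hu : ∀ n, u n ∈ K)
    (hstep : Tendsto (fun n => dist (u (n+1)) (u n)) atTop (𝓝 0))
    (hfin : {p | MapClusterPt p atTop u}.Finite) :
    ∃ p, MapClusterPt p atTop u ∧ Tendsto u atTop (𝓝 p) := by
  set S := {p | MapClusterPt p atTop u} with hS
  have hSne : S.Nonempty := by
    obtain ⟨q, _, hq⟩ := hK.exists_mapClusterPt (u := u) (f := atTop)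
      (Filter.tendsto_principal.2 (Eventually.of_forall (fun n => hu n)))
    exact ⟨q, hq⟩
  -- separation constant
  obtain ⟨δ, hδpos, hδ⟩ : ∃ δ > 0, ∀ a ∈ S, ∀ b ∈ S, a ≠ b → δ ≤ dist a b := by
    classical
    set T : Finset (Y × Y) := (hfin.toFinset ×ˢ hfin.toFinset).filter (fun p => p.1 ≠ p.2)
    by_cases hT : T.Nonempty
    · set D : Finset ℝ := T.image (fun p => dist p.1 p.2)
      have hDne : D.Nonempty := hT.image _
      refine ⟨D.min' hDne, ?_, ?_⟩
      · obtain ⟨r, hr, hre⟩ := Finset.mem_image.1 (D.min'_mem hDne)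
        rw [← hre]
        simp only [T, Finset.mem_filter] at hr
        exact dist_pos.2 hr.2
      · intro a ha b hb hab
        apply D.min'_le
        exact Finset.mem_image.2 ⟨(a,b), Finset.mem_filter.2
          ⟨Finset.mem_product.2 ⟨hfin.mem_toFinset.2 ha, hfin.mem_toFinset.2 hb⟩, hab⟩, rfl⟩
    · refine ⟨1, one_pos, fun a ha b hb hab => absurd ?_ hT⟩
      exact ⟨(a,b), Finset.mem_filter.2
        ⟨Finset.mem_product.2 ⟨hfin.mem_toFinset.2 ha, hfin.mem_toFinset.2 hb⟩, hab⟩⟩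
  -- eventually near cluster set within δ/3, and steps < δ/3
  have hnear := eventually_near_cluster hK hu (by positivity : (0:ℝ) < δ/3)
  have hsmall : ∀ᶠ n in atTop, dist (u (n+1)) (u n) < δ/3 := by
    have := hstep.eventually (eventually_lt_nhds (by positivity : (0:ℝ) < δ/3))
    simpa using this
  obtain ⟨N, hN⟩ := (hnear.and hsmall).exists_forall_of_atTop
  obtain ⟨p, hpS, hpN⟩ := (hN N le_rfl).1
  -- trapping: for n ≥ N, u n ∈ ball p (δ/3)
  have htrap : ∀ n, N ≤ n → dist (u n) p < δ/3 := by
    intro n hn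
    induction n with
    | zero => simpa [Nat.le_zero.1 hn] using hpN
    | succ m ih =>
      rcases Nat.lt_or_ge N (m+1) with h | h
      · have hm : N ≤ m := Nat.lt_succ_iff.1 h
        have ihm := ih hm
        obtain ⟨⟨q, hqS, hq⟩, _⟩ := hN (m+1) (le_of_lt h)
        obtain ⟨_, hstepm⟩ := hN m hm
        have hq_eq : q = p := by
          by_contra hne
          have := hδ q hqS p hpS hne
          have : dist q p ≤ dist q (u (m+1)) + dist (u (m+1)) (u m) + dist (u m) p :=
            dist_triangle4 q (u (m+1)) (u m) p
          rw [dist_comm q (u (m+1))] at this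
          linarith [hδ q hqS p hpS hne]
        rw [hq_eq] at hq
        exact hq
      · have : N = m + 1 := le_antisymm hn h
        rw [← this]; exact hpN
  -- convergence
  refine ⟨p, hpS, Metric.tendsto_atTop.2 (fun ε hε => ?_)⟩
  set ε' := min ε (δ/3) with hε'
  have hε'pos : 0 < ε' := lt_min hε (by positivity)
  have hnear' := eventually_near_cluster hK hu hε'pos
  obtain ⟨M, hM⟩ := hnear'.exists_forall_of_atTop
  refine ⟨max N M, fun n hn => ?_⟩
  obtain ⟨q, hqS, hq⟩ := hM n (le_trans (le_max_right _ _) hn)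
  have htr := htrap n (le_trans (le_max_left _ _) hn)
  have hq_eq : q = p := by
    by_contra hne
    have h1 : dist q p ≤ dist q (u n) + dist (u n) p := dist_triangle _ _ _
    rw [dist_comm q (u n)] at h1
    have h2 : ε' ≤ δ/3 := min_le_right _ _
    linarith [hδ q hqS p hpS hne]
  rw [hq_eq] at hq
  exact lt_of_lt_of_le hq (min_le_left _ _)



/-- **Norm convergence of Frank–Wolfe iterates with finitely many cluster points**
(Theorem 3.3 (iv)). If `C` is compact in the norm topology, `f'` is uniformly continuous
on `C`, the stepsizes satisfy the open loop rule, and the sequence `(x_k)` has only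
finitely many (norm) cluster points, then `(x_k)` converges in norm to a solution of
`min_{x ∈ C} f(x)`. -/
theorem stmt_8
    {X : Type*} [NormedAddCommGroup X] [NormedSpace ℝ X] [CompleteSpace X]
    (C : Set X) (hCne : C.Nonempty) (hCcl : IsClosed C)
    (hCbd : Bornology.IsBounded C) (hCcv : Convex ℝ C)
    (hCcomp : IsCompact C)
    (f : X → ℝ) (f' : X → X →L[ℝ] ℝ)
    (hfconv : ConvexOn ℝ Set.univ f)
    (hfderiv : ∀ x : X, HasFDerivAt f (f' x) x)
    (hfUC : UniformContinuousOn f' C)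
    (xstar : X) (hxstarC : xstar ∈ C) (hxstarmin : ∀ y ∈ C, f xstar ≤ f y)
    (x xbar : ℕ → X) (γ : ℕ → ℝ)
    (hx0 : x 0 ∈ C)
    (hxbarC : ∀ k, xbar k ∈ C)
    (hxbarmin : ∀ k, ∀ y ∈ C, f' (x k) (xbar k) ≤ f' (x k) y)
    (hupdate : ∀ k, x (k + 1) = x k + γ k • (xbar k - x k))
    (hγ : ∀ k, γ k ∈ Set.Ioc (0 : ℝ) 1)
    (hγ0 : Tendsto γ atTop (𝓝 0))
    (hγsum : Tendsto (fun n => ∑ k ∈ Finset.range n, γ k) atTop atTop)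
    (hcluster : {p : X | MapClusterPt p atTop x}.Finite) :
    ∃ p ∈ C, (∀ y ∈ C, f p ≤ f y) ∧ Tendsto x atTop (𝓝 p) := by
  -- iterates stay in C
  have hxC : ∀ k, x k ∈ C := by
    intro k
    induction k with
    | zero => exact hx0
    | succ m ih =>
      have h1 : x (m+1) = (1 - γ m) • x m + γ m • xbar m := by
        rw [hupdate m]; module
      rw [h1]
      exact hCcv ih (hxbarC m) (by linarith [(hγ m).2]) (le_of_lt (hγ m).1) (by ring)
  -- a bound on distances in C
  obtain ⟨M, hM⟩ := Metric.isBounded_iff.1 hCbd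
  have hM0 : 0 ≤ M := le_trans dist_nonneg (hM hCne.choose_spec hCne.choose_spec)
  -- steps vanish
  have hstep : Tendsto (fun n => dist (x (n+1)) (x n)) atTop (𝓝 0) := by
    apply squeeze_zero (fun n => dist_nonneg)
      (g := fun n => γ n * M)
    · intro n
      rw [hupdate n, dist_eq_norm]
      have : x n + γ n • (xbar n - x n) - x n = γ n • (xbar n - x n) := by abel
      rw [this, norm_smul, Real.norm_eq_abs, abs_of_pos (hγ n).1]
      apply mul_le_mul_of_nonneg_left _ (le_of_lt (hγ n).1)
      rw [← dist_eq_norm]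
      exact hM (hxbarC n) (hxC n)
    · simpa using hγ0.mul_const M
  -- convergence to a cluster point
  obtain ⟨p, hpcl, htend⟩ := tendsto_of_finite_cluster hCcomp hxC hstep hcluster
  have hpC : p ∈ C := hCcl.mem_of_tendsto htend (Eventually.of_forall hxC)
  refine ⟨p, hpC, ?_, htend⟩
  -- f'(x k) → f'(p)
  have htendC : Tendsto x atTop (𝓝[C] p) :=
    tendsto_nhdsWithin_iff.2 ⟨htend, Eventually.of_forall hxC⟩
  have hf'x : Tendsto (fun k => f' (x k)) atTop (𝓝 (f' p)) :=
    ((hfUC.continuousOn.continuousWithinAt hpC).tendsto).comp htendC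
  have hf'x1 : Tendsto (fun k => f' (x (k+1))) atTop (𝓝 (f' p)) :=
    hf'x.comp (tendsto_add_atTop_nat 1)
  -- error term
  set e : ℕ → ℝ := fun k => (f' (x (k+1)) - f' (x k)) (x k - xbar k) with he_def
  have he : Tendsto e atTop (𝓝 0) := by
    have hbound : ∀ k, ‖e k‖ ≤ ‖f' (x (k+1)) - f' (x k)‖ * M := by
      intro k
      refine le_trans ((f' (x (k+1)) - f' (x k)).le_opNorm _) ?_
      apply mul_le_mul_of_nonneg_left _ (norm_nonneg _)
      rw [← dist_eq_norm]
      exact hM (hxC k) (hxbarC k)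
    have htend0 : Tendsto (fun k => ‖f' (x (k+1)) - f' (x k)‖ * M) atTop (𝓝 0) := by
      have : Tendsto (fun k => f' (x (k+1)) - f' (x k)) atTop (𝓝 0) := by
        simpa using hf'x1.sub hf'x
      simpa using (this.norm.mul_const M)
    exact squeeze_zero_norm hbound htend0
  set g : ℕ → ℝ := fun k => f' (x k) (x k - xbar k) with hg_def
  -- key claim: the FW gap is frequently small
  have hclaim : ∀ c : ℝ, 0 < c → ∃ᶠ k in atTop, g k < c := by
    intro c hc
    by_contra hcon
    rw [Filter.not_frequently] at hcon
    have hcon' : ∀ᶠ k in atTop, c ≤ g k := hcon.mono (fun k hk => not_lt.1 hk)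
    have hesmall : ∀ᶠ k in atTop, |e k| < c/2 := by
      have := Metric.tendsto_atTop.1 he (c/2) (by linarith)
      obtain ⟨N, hN⟩ := this
      exact eventually_atTop.2 ⟨N, fun k hk => by
        have := hN k hk; rwa [Real.dist_eq, sub_zero] at this⟩
    obtain ⟨N, hNall⟩ := (hcon'.and hesmall).exists_forall_of_atTop
    -- per-step decrease
    have hdec : ∀ k, N ≤ k → γ k * (c/2) ≤ f (x k) - f (x (k+1)) := by
      intro k hk
      obtain ⟨hgk, hek⟩ := hNall k hk
      have hgrad := grad_ineq hfconv hfderiv (x (k+1)) (x k)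
      have hxdiff : x k - x (k+1) = γ k • (x k - xbar k) := by
        rw [hupdate k]; module
      have heval : f' (x (k+1)) (x k - x (k+1)) = γ k * (g k + e k) := by
        rw [hxdiff, map_smul]
        simp only [smul_eq_mul, he_def, hg_def]
        simp only [ContinuousLinearMap.sub_apply]
        ring
      have hge : c/2 ≤ g k + e k := by
        have := abs_lt.1 hek
        linarith
      calc γ k * (c/2) ≤ γ k * (g k + e k) :=
            mul_le_mul_of_nonneg_left hge (le_of_lt (hγ k).1)
        _ = f' (x (k+1)) (x k - x (k+1)) := heval.symm
        _ ≤ f (x k) - f (x (k+1)) := hgrad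
    -- telescoping
    have htel : ∀ n : ℕ, (c/2) * ∑ j ∈ Finset.range n, γ (N + j) ≤ f (x N) - f (x (N + n)) := by
      intro n
      induction n with
      | zero => simp
      | succ m ih =>
        rw [Finset.sum_range_succ, mul_add]
        have hd := hdec (N + m) (Nat.le_add_right N m)
        have : N + (m+1) = (N + m) + 1 := by ring
        rw [this, mul_comm (c/2) (γ (N+m))]
        linarith
    have hbd : ∀ n : ℕ, (c/2) * ∑ j ∈ Finset.range n, γ (N + j) ≤ f (x N) - f xstar := by
      intro n
      exact le_trans (htel n) (by linarith [hxstarmin (x (N+n)) (hxC (N+n))])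
    -- but the partial sums diverge
    set B := f (x N) - f xstar with hB
    have hdiv : ∀ᶠ n in atTop, (2/c) * B + ∑ k ∈ Finset.range N, γ k + 1
        ≤ ∑ k ∈ Finset.range n, γ k := hγsum.eventually_ge_atTop _
    obtain ⟨n, hn1, hn2⟩ := (hdiv.and (eventually_ge_atTop N)).exists
    obtain ⟨m, rfl⟩ := Nat.exists_eq_add_of_le hn2
    rw [Finset.sum_range_add] at hn1
    have hsum_ge : (2/c) * B + 1 ≤ ∑ j ∈ Finset.range m, γ (N + j) := by linarith
    have hbdm := hbd m
    have hc2 : (0:ℝ) < c/2 := by linarith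
    have h1 : c/2 * ((2/c) * B + 1) ≤ c/2 * ∑ j ∈ Finset.range m, γ (N + j) :=
      mul_le_mul_of_nonneg_left hsum_ge (le_of_lt hc2)
    have h2 : c/2 * ((2/c) * B + 1) = B + c/2 := by
      field_simp
    linarith
  -- conclude optimality
  intro y hyC
  have hhg : ∀ k, f' (x k) (x k - y) ≤ g k := by
    intro k
    have := hxbarmin k y hyC
    simp only [hg_def, map_sub]
    linarith
  have happly : Continuous (fun q : (X →L[ℝ] ℝ) × X => q.1 q.2) :=
    isBoundedBilinearMap_apply.continuous
  have hL : Tendsto (fun k => f' (x k) (x k - y)) atTop (𝓝 (f' p (p - y))) := by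
    have hpair : Tendsto (fun k => ((f' (x k) : X →L[ℝ] ℝ), x k - y)) atTop
        (𝓝 (f' p, p - y)) := hf'x.prodMk_nhds (htend.sub tendsto_const_nhds)
    exact (happly.tendsto (f' p, p - y)).comp hpair
  have hLle : f' p (p - y) ≤ 0 := by
    by_contra hpos
    push_neg at hpos
    set L := f' p (p - y) with hLdef
    have hev : ∀ᶠ k in atTop, L/2 < f' (x k) (x k - y) := by
      apply hL.eventually (eventually_gt_nhds (by linarith))
    have hfr := hclaim (L/2) (by linarith)
    obtain ⟨k, hk1, hk2⟩ := (hfr.and_eventually hev).exists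
    linarith [hhg k]
  have hgrad := grad_ineq hfconv hfderiv p y
  have : f' p (y - p) = -(f' p (p - y)) := by
    rw [← map_neg]; congr 1; abel
  rw [this] at hgrad
  linarith
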